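/- Let 0 < p ≤ 1 and define u₀(x) = x^{1/p} for x ≥ 0 and u₀(x) = 0 for x ≤ 0, and Q(x) = (p+1)u₀(x)^p - x, so that Q(x) = px for x ≥ 0 and Q(x) = -x for x ≤ 0. If u₁, u₂ are two solutions of -u'' - xu + |u|^p u = 0 on ℝ with u_i > u₀ everywhere, u_i → 0 as x → -∞ and u_i - x^{1/p} → 0 as x → +∞, then u₁ ≡ u₂. -/

import Mathlib

open Filter

lemma stmt19_pow_ineq {p x a b : ℝ} (hp : 0 < p) (hb : (max x 0) ^ (1/p) < b)
    (hba : b < a) : x * (a - b) < a ^ p * a - b ^ p * b := by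
  have hm0 : (0:ℝ) ≤ max x 0 := le_max_right x 0
  have hb0 : 0 < b := lt_of_le_of_lt (Real.rpow_nonneg hm0 _) hb
  have ha0 : 0 < a := hb0.trans hba
  have hbp : max x 0 < b ^ p := by
    have h1 : ((max x 0) ^ (1/p)) ^ p < b ^ p :=
      Real.rpow_lt_rpow (Real.rpow_nonneg hm0 _) hb hp
    rwa [← Real.rpow_mul hm0, one_div_mul_cancel hp.ne', Real.rpow_one] at h1
  -- Bernoulli tangent-line inequality
  set s : ℝ := (a - b) / b with hs
  have hs0 : 0 < s := div_pos (sub_pos.2 hba) hb0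
  have h1s : (1:ℝ) + s = a / b := by simp only [hs]; field_simp; ring
  have hbern : 1 + (p + 1) * s ≤ (1 + s) ^ (p + 1) :=
    one_add_mul_self_le_rpow_one_add (by linarith) (by linarith)
  have hab : (1 + s) ^ (p + 1) = a ^ (p + 1) / b ^ (p + 1) := by
    rw [h1s, Real.div_rpow ha0.le hb0.le]
  have hbne : b ^ (p + 1) ≠ 0 := (Real.rpow_pos_of_pos hb0 _).ne'
  have key : b ^ (p + 1) + (p + 1) * b ^ p * (a - b) ≤ a ^ (p + 1) := by
    have h2 := mul_le_mul_of_nonneg_right hbern (Real.rpow_pos_of_pos hb0 (p+1)).le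
    rw [hab, div_mul_cancel₀ _ hbne] at h2
    have hbp1 : b ^ (p + 1) = b ^ p * b := Real.rpow_add_one hb0.ne' p
    calc b ^ (p + 1) + (p + 1) * b ^ p * (a - b)
        = (1 + (p + 1) * s) * b ^ (p + 1) := by simp only [hs, hbp1]; field_simp
      _ ≤ a ^ (p + 1) := h2
  have hxp : x < (p + 1) * b ^ p := by
    have h3 : x ≤ max x 0 := le_max_left x 0
    nlinarith [Real.rpow_pos_of_pos hb0 p]
  have hap1 : a ^ (p + 1) = a ^ p * a := Real.rpow_add_one ha0.ne' p
  have hbp1 : b ^ (p + 1) = b ^ p * b := Real.rpow_add_one hb0.ne' p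
  have h4 : x * (a - b) < (p + 1) * b ^ p * (a - b) :=
    mul_lt_mul_of_pos_right hxp (sub_pos.2 hba)
  linarith [key, hap1, hbp1]

lemma stmt19_le (p : ℝ) (hp0 : 0 < p) (u₁ u₂ : ℝ → ℝ)
    (h1 : ContDiff ℝ 2 u₁) (h2 : ContDiff ℝ 2 u₂)
    (heq1 : ∀ x, -(deriv (deriv u₁) x) - x * u₁ x + |u₁ x| ^ p * u₁ x = 0)
    (heq2 : ∀ x, -(deriv (deriv u₂) x) - x * u₂ x + |u₂ x| ^ p * u₂ x = 0)
    (hgt1 : ∀ x, (max x 0) ^ (1 / p) < u₁ x)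
    (hgt2 : ∀ x, (max x 0) ^ (1 / p) < u₂ x)
    (hbot1 : Tendsto u₁ atBot (nhds 0)) (hbot2 : Tendsto u₂ atBot (nhds 0))
    (htop1 : Tendsto (fun x => u₁ x - x ^ (1 / p)) atTop (nhds 0))
    (htop2 : Tendsto (fun x => u₂ x - x ^ (1 / p)) atTop (nhds 0)) :
    ∀ x, u₁ x ≤ u₂ x := by
  -- positivity of solutions
  have hpos1 : ∀ x, 0 < u₁ x := fun x =>
    lt_of_le_of_lt (Real.rpow_nonneg (le_max_right x 0) _) (hgt1 x)
  have hpos2 : ∀ x, 0 < u₂ x := fun x =>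
    lt_of_le_of_lt (Real.rpow_nonneg (le_max_right x 0) _) (hgt2 x)
  -- regularity
  have h1' := (contDiff_succ_iff_deriv (n := 1)).mp (by norm_num [h1] : ContDiff ℝ (1+1) u₁)
  have h2' := (contDiff_succ_iff_deriv (n := 1)).mp (by norm_num [h2] : ContDiff ℝ (1+1) u₂)
  have hd1 : Differentiable ℝ u₁ := h1'.1
  have hd2 : Differentiable ℝ u₂ := h2'.1
  have hd1' : Differentiable ℝ (deriv u₁) := h1'.2.2.differentiable one_ne_zero
  have hd2' : Differentiable ℝ (deriv u₂) := h2'.2.2.differentiable one_ne_zero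
  have hc1' : Continuous (deriv u₁) := hd1'.continuous
  have hc2' : Continuous (deriv u₂) := hd2'.continuous
  -- the difference
  set w : ℝ → ℝ := fun x => u₁ x - u₂ x with hw
  have hwc : Continuous w := (h1.continuous).sub h2.continuous
  have hwd : Differentiable ℝ w := hd1.sub hd2
  have hdw : deriv w = fun x => deriv u₁ x - deriv u₂ x := by
    funext x; exact deriv_sub (hd1 x) (hd2 x)
  have hdwd : Differentiable ℝ (deriv w) := by rw [hdw]; exact hd1'.sub hd2'
  have hdwc : Continuous (deriv w) := hdwd.continuous
  have hddw : ∀ x, deriv (deriv w) x = deriv (deriv u₁) x - deriv (deriv u₂) x := by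
    intro x; rw [hdw]; exact deriv_sub (hd1' x) (hd2' x)
  -- second derivative is positive wherever w is positive
  have hw'' : ∀ y, 0 < w y → 0 < deriv (deriv w) y := by
    intro y hy
    have e1 := heq1 y
    have e2 := heq2 y
    rw [abs_of_pos (hpos1 y)] at e1
    rw [abs_of_pos (hpos2 y)] at e2
    have hba : u₂ y < u₁ y := sub_pos.1 hy
    have hk := stmt19_pow_ineq hp0 (hgt2 y) hba
    rw [hddw y]
    have hw_eq : w y = u₁ y - u₂ y := rfl
    nlinarith [hk, e1, e2]
  -- limits of w at ±∞
  have hwbot : Tendsto w atBot (nhds 0) := by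
    have := hbot1.sub hbot2
    simpa using this
  have hwtop : Tendsto w atTop (nhds 0) := by
    have h := htop1.sub htop2
    have he : (fun x => (u₁ x - x ^ (1/p)) - (u₂ x - x ^ (1/p))) = w := by
      funext x; simp [hw]
    rw [he] at h
    simpa using h
  -- suppose not
  intro x
  by_contra hcon
  push_neg at hcon
  have hc : 0 < w x := sub_pos.2 hcon
  -- eventual bounds
  have hBt : ∀ᶠ y in atTop, w y < w x := hwtop.eventually_lt_const hc
  have hBb : ∀ᶠ y in atBot, w y < w x := hwbot.eventually_lt_const hc
  obtain ⟨B, hB⟩ := eventually_atTop.mp hBt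
  obtain ⟨A, hA⟩ := eventually_atBot.mp hBb
  -- global maximum
  set a : ℝ := min A x with ha
  set b : ℝ := max B x with hb
  have hxab : x ∈ Set.Icc a b := ⟨min_le_right A x, le_max_right B x⟩
  obtain ⟨x₀, hx₀ab, hx₀max⟩ := isCompact_Icc.exists_isMaxOn ⟨x, hxab⟩ hwc.continuousOn
  have hcx₀ : w x ≤ w x₀ := hx₀max hxab
  have hglob : ∀ y, w y ≤ w x₀ := by
    intro y
    by_cases hy : y ∈ Set.Icc a b
    · exact hx₀max hy
    · rcases not_and_or.mp ((Set.mem_Icc).not.mp hy) with h | h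
      · push_neg at h
        exact le_trans (hA y (le_of_lt (lt_of_lt_of_le h (min_le_left A x)))).le hcx₀
      · push_neg at h
        exact le_trans (hB y (le_of_lt (lt_of_le_of_lt (le_max_left B x) h))).le hcx₀
  have hwx₀ : 0 < w x₀ := hc.trans_le hcx₀
  -- the maximum is a local max, so deriv w x₀ = 0
  have hloc : IsLocalMax w x₀ := Filter.Eventually.of_forall hglob
  have hderiv0 : deriv w x₀ = 0 := hloc.deriv_eq_zero
  -- find a small interval to the right where w stays positive
  have hopen : IsOpen {y | 0 < w y} := isOpen_lt continuous_const hwc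
  obtain ⟨ε, hε, hball⟩ := Metric.isOpen_iff.mp hopen x₀ hwx₀
  set δ : ℝ := ε / 2 with hδ
  have hδ0 : 0 < δ := by positivity
  have hsub : Set.Icc x₀ (x₀ + δ) ⊆ {y | 0 < w y} := by
    intro y hy
    apply hball
    rw [Metric.mem_ball, Real.dist_eq, abs_lt]
    constructor <;> [linarith [hy.1]; linarith [hy.2, half_lt_self hε]]
  -- deriv w is strictly increasing on [x₀, x₀+δ]
  have hmono' : StrictMonoOn (deriv w) (Set.Icc x₀ (x₀ + δ)) := by
    apply strictMonoOn_of_deriv_pos (convex_Icc _ _) hdwc.continuousOn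
    intro y hy
    rw [interior_Icc] at hy
    exact hw'' y (hsub ⟨hy.1.le, hy.2.le⟩)
  have hdwpos : ∀ y ∈ Set.Ioo x₀ (x₀ + δ), 0 < deriv w y := by
    intro y hy
    have := hmono' ⟨le_refl _, by linarith [hδ0]⟩ ⟨hy.1.le, hy.2.le⟩ hy.1
    rwa [hderiv0] at this
  -- hence w is strictly increasing on [x₀, x₀+δ], contradicting the max
  have hmono : StrictMonoOn w (Set.Icc x₀ (x₀ + δ)) := by
    apply strictMonoOn_of_deriv_pos (convex_Icc _ _) hwc.continuousOn
    intro y hy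
    rw [interior_Icc] at hy
    exact hdwpos y hy
  have : w x₀ < w (x₀ + δ) :=
    hmono ⟨le_refl _, by linarith⟩ ⟨by linarith, le_refl _⟩ (by linarith)
  exact absurd (hglob (x₀ + δ)) (not_le.2 this)


/-- Uniqueness in the case `0 < p ≤ 1`: two solutions of `-u'' - xu + |u|^p u = 0` on `ℝ`
lying strictly above `u₀(x) = max{x,0}^{1/p}`, tending to `0` at `-∞` and to `x^{1/p}`
at `+∞`, coincide. -/
theorem stmt19 (p : ℝ) (hp0 : 0 < p) (hp1 : p ≤ 1) (u₁ u₂ : ℝ → ℝ)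
    (h1 : ContDiff ℝ 2 u₁) (h2 : ContDiff ℝ 2 u₂)
    (heq1 : ∀ x, -(deriv (deriv u₁) x) - x * u₁ x + |u₁ x| ^ p * u₁ x = 0)
    (heq2 : ∀ x, -(deriv (deriv u₂) x) - x * u₂ x + |u₂ x| ^ p * u₂ x = 0)
    (hgt1 : ∀ x, (max x 0) ^ (1 / p) < u₁ x)
    (hgt2 : ∀ x, (max x 0) ^ (1 / p) < u₂ x)
    (hbot1 : Tendsto u₁ atBot (nhds 0)) (hbot2 : Tendsto u₂ atBot (nhds 0))
    (htop1 : Tendsto (fun x => u₁ x - x ^ (1 / p)) atTop (nhds 0))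
    (htop2 : Tendsto (fun x => u₂ x - x ^ (1 / p)) atTop (nhds 0)) :
    u₁ = u₂ := by
  funext x
  exact le_antisymm
    (stmt19_le p hp0 u₁ u₂ h1 h2 heq1 heq2 hgt1 hgt2 hbot1 hbot2 htop1 htop2 x)
    (stmt19_le p hp0 u₂ u₁ h2 h1 heq2 heq1 hgt2 hgt1 hbot2 hbot1 htop2 htop1 x)
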